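/- arXiv:2109.09377 — 3 statements merged into one kernel-verified Lean document; each statement's English description precedes it below -/
import Mathlib

section
/- Let V be a real inner product space, and let u, v ∈ V be unit vectors with ⟨u, v⟩ ∉ {−1, 1}. Let P : V → V be an orthogonal linear map with Pu = v, let π₀ be the orthogonal projection onto the orthogonal complement of u, and π₁ the orthogonal projection onto the orthogonal complement of v. Define D = P ∘ π₀ − π₁ on the plane W = span{u, v}, assuming W is P-invariant and letting δ = det(P|_W) ∈ {−1, 1}. Then the kernel of D restricted to W is the one-dimensional subspace spanned by u − δv. -/
open scoped RealInnerProductSpace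

theorem det_aux {V : Type*} [AddCommGroup V] [Module ℝ V] (u v : V)
    (li : LinearIndependent ℝ ![u, v])
    (P : V →ₗ[ℝ] V)
    (hW : ∀ x ∈ Submodule.span ℝ {u, v}, P x ∈ Submodule.span ℝ {u, v})
    (a b : ℝ) (hPu : P u = v) (hab : a • u + b • v = P v) :
    LinearMap.det (P.restrict hW) = -a := by
  have humem : u ∈ Submodule.span ℝ ({u, v} : Set V) :=
    Submodule.subset_span (by simp)
  have hvmem : v ∈ Submodule.span ℝ ({u, v} : Set V) :=
    Submodule.subset_span (by simp)
  have li2 : LinearIndependent ℝ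
      ![(⟨u, humem⟩ : Submodule.span ℝ ({u, v} : Set V)), ⟨v, hvmem⟩] := by
    apply LinearIndependent.of_comp (Submodule.span ℝ ({u, v} : Set V)).subtype
    have : (Submodule.span ℝ ({u, v} : Set V)).subtype ∘
        ![(⟨u, humem⟩ : Submodule.span ℝ ({u, v} : Set V)), ⟨v, hvmem⟩] = ![u, v] := by
      funext i; fin_cases i <;> rfl
    rw [this]; exact li
  have hsp : ⊤ ≤ Submodule.span ℝ (Set.range
      ![(⟨u, humem⟩ : Submodule.span ℝ ({u, v} : Set V)), ⟨v, hvmem⟩]) := by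
    rintro ⟨x, hx⟩ -
    rcases Submodule.mem_span_pair.mp hx with ⟨α, β, hx'⟩
    have hrange : Set.range ![(⟨u, humem⟩ : Submodule.span ℝ ({u, v} : Set V)), ⟨v, hvmem⟩]
        = {⟨u, humem⟩, ⟨v, hvmem⟩} := by
      ext z; simp [Matrix.range_cons, Matrix.range_empty, or_comm]
    rw [hrange]
    exact Submodule.mem_span_pair.mpr ⟨α, β, Subtype.ext (by simpa using hx')⟩
  obtain ⟨B, hB0, hB1⟩ : ∃ B : Module.Basis (Fin 2) ℝ (Submodule.span ℝ ({u, v} : Set V)),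
      B 0 = ⟨u, humem⟩ ∧ B 1 = ⟨v, hvmem⟩ :=
    ⟨Module.Basis.mk li2 hsp, by simp [Module.Basis.mk_apply], by simp [Module.Basis.mk_apply]⟩
  have hres0 : P.restrict hW ⟨u, humem⟩ = ⟨v, hvmem⟩ :=
    Subtype.ext (by simp [LinearMap.restrict_apply, hPu])
  have hres1 : P.restrict hW ⟨v, hvmem⟩ =
      a • (⟨u, humem⟩ : Submodule.span ℝ ({u, v} : Set V)) + b • ⟨v, hvmem⟩ :=
    Subtype.ext (by simp [LinearMap.restrict_apply, ← hab])
  have t00 : (LinearMap.toMatrix B B (P.restrict hW)) 0 0 = 0 := by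
    rw [LinearMap.toMatrix_apply, hB0, hres0, ← hB1, B.repr_self]; simp
  have t10 : (LinearMap.toMatrix B B (P.restrict hW)) 1 0 = 1 := by
    rw [LinearMap.toMatrix_apply, hB0, hres0, ← hB1, B.repr_self]; simp
  have t01 : (LinearMap.toMatrix B B (P.restrict hW)) 0 1 = a := by
    rw [LinearMap.toMatrix_apply, hB1, hres1, ← hB0, ← hB1, map_add, map_smul, map_smul,
      B.repr_self, B.repr_self]; simp
  have t11 : (LinearMap.toMatrix B B (P.restrict hW)) 1 1 = b := by
    rw [LinearMap.toMatrix_apply, hB1, hres1, ← hB0, ← hB1, map_add, map_smul, map_smul,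
      B.repr_self, B.repr_self]; simp
  rw [← LinearMap.det_toMatrix B, Matrix.det_fin_two, t00, t10, t01, t11]; ring

theorem stmt_5 (V : Type*) [NormedAddCommGroup V] [InnerProductSpace ℝ V]
    [FiniteDimensional ℝ V]
    (u v : V) (hu : ‖u‖ = 1) (hv : ‖v‖ = 1)
    (huv : ⟪u, v⟫ ≠ 1) (huv' : ⟪u, v⟫ ≠ -1)
    (P : V →ₗ[ℝ] V) (hP : ∀ x, ‖P x‖ = ‖x‖) (hPu : P u = v)
    (hW : ∀ x ∈ Submodule.span ℝ {u, v}, P x ∈ Submodule.span ℝ {u, v})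
    (δ : ℝ) (hδ : δ = LinearMap.det (P.restrict hW)) :
    ∀ x ∈ Submodule.span ℝ {u, v},
      (P (x - ⟪x, u⟫ • u) - (x - ⟪x, v⟫ • v) = 0 ↔
        x ∈ Submodule.span ℝ {u - δ • v}) := by
  set c : ℝ := ⟪u, v⟫ with hc
  have hinner : ∀ a b : V, ⟪P a, P b⟫ = ⟪a, b⟫ := by
    intro a b
    have h1 := norm_add_sq_real (P a) (P b)
    rw [← map_add, hP, hP, hP, norm_add_sq_real a b] at h1
    linarith
  have huu : ⟪u, u⟫ = (1 : ℝ) := by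
    rw [real_inner_self_eq_norm_sq, hu]; norm_num
  have hvv : ⟪v, v⟫ = (1 : ℝ) := by
    rw [real_inner_self_eq_norm_sq, hv]; norm_num
  have hvu : ⟪v, u⟫ = c := (real_inner_comm v u).symm
  have hind : ∀ a : ℝ, a • v ≠ u := by
    intro a h
    have h1 : ⟪a • v, v⟫ = c := by rw [h, hc, real_inner_comm]
    rw [real_inner_smul_left, hvv, mul_one] at h1
    have h2 : ‖a • v‖ = 1 := by rw [h, hu]
    rw [norm_smul, hv, mul_one, Real.norm_eq_abs] at h2
    subst h1
    rcases abs_eq (by norm_num : (0:ℝ) ≤ 1) |>.mp h2 with h | h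
    · exact huv h
    · exact huv' h
  have hvne : v ≠ 0 := by
    intro h; rw [h] at hv; simp at hv
  have li : LinearIndependent ℝ ![u, v] := by
    rw [linearIndependent_fin2]
    refine ⟨by simpa using hvne, by simpa using hind⟩
  have humem : u ∈ Submodule.span ℝ ({u, v} : Set V) :=
    Submodule.subset_span (by simp)
  have hvmem : v ∈ Submodule.span ℝ ({u, v} : Set V) :=
    Submodule.subset_span (by simp)
  obtain ⟨a, b, hab⟩ := Submodule.mem_span_pair.mp (hW v hvmem)
  have h1 : a * c + b = c := by
    have := hinner u v
    rw [hPu, hab.symm] at this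
    rw [inner_add_right, real_inner_smul_right, real_inner_smul_right, hvu, hvv, hc.symm] at this
    linarith
  have h2 : a ^ 2 + 2 * a * b * c + b ^ 2 = 1 := by
    have := hinner v v
    rw [← hab, hvv] at this
    simp only [inner_add_left, inner_add_right, real_inner_smul_left,
      real_inner_smul_right, huu, hvv, hc.symm, hvu] at this
    nlinarith [this]
  have hc2 : c ^ 2 ≠ 1 := by
    intro h
    have h' : (c - 1) * (c + 1) = 0 := by ring_nf; linarith
    rcases mul_eq_zero.mp h' with h'' | h''
    · exact huv (by linarith)
    · exact huv' (by linarith)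
  have key2 : (a ^ 2 - 1) * (1 - c ^ 2) = 0 := by
    linear_combination h2 - (b + a * c + c) * h1
  have ha2 : a ^ 2 = 1 := by
    rcases mul_eq_zero.mp key2 with h' | h'
    · linarith
    · exact absurd (by linarith) hc2
  have hδa : δ = -a := by rw [hδ, det_aux u v li P hW a b hPu hab]
  have hδ2 : δ ^ 2 = 1 := by rw [hδa]; nlinarith [ha2]
  have ha' : a = -δ := by linarith
  have hb' : b = c + δ * c := by rw [ha'] at h1; linarith
  have hnz : u - c • v ≠ 0 := by
    intro h
    exact hind c (sub_eq_zero.mp h).symm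
  have key : ∀ α β : ℝ,
      P ((α • u + β • v) - ⟪α • u + β • v, u⟫ • u)
        - ((α • u + β • v) - ⟪α • u + β • v, v⟫ • v)
      = (-(α + β * δ)) • (u - c • v) := by
    intro α β
    have e1 : ⟪α • u + β • v, u⟫ = α + β * c := by
      rw [inner_add_left, real_inner_smul_left, real_inner_smul_left, huu, hvu]; ring
    have e2 : ⟪α • u + β • v, v⟫ = α * c + β := by
      rw [inner_add_left, real_inner_smul_left, real_inner_smul_left, ← hc, hvv]; ring
    rw [e1, e2]
    simp only [map_sub, map_add, map_smul]
    rw [hPu, ← hab, ha', hb']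
    module
  intro x hx
  obtain ⟨α, β, hx'⟩ := Submodule.mem_span_pair.mp hx
  constructor
  · intro h
    rw [← hx', key α β] at h
    rcases smul_eq_zero.mp h with h' | h'
    · have hα : α = -(β * δ) := by linarith [neg_eq_zero.mp h']
      rw [← hx', Submodule.mem_span_singleton]
      refine ⟨-(β * δ), ?_⟩
      rw [hα]
      match_scalars
      · ring
      · linear_combination β * hδ2
    · exact absurd h' hnz
  · intro h
    rcases Submodule.mem_span_singleton.mp h with ⟨t, ht⟩
    have hx2 : t • u + (-(t * δ)) • v = x := by rw [← ht]; module
    rw [← hx2, key t (-(t * δ)),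
      show -(t + -(t * δ) * δ) = 0 from by linear_combination t * hδ2, zero_smul]
end

section
/- Let V be a finite-dimensional real inner product space, u, v unit vectors spanning a 2-dimensional subspace W with ⟨u,v⟩ ∉ {−1,1}, and P : V → V an orthogonal linear map with Pu = v such that W is P-invariant and P restricted to W^⊥ is the identity and det(P|_W) = 1. Let π₀, π₁ be the orthogonal projections onto u^⊥ and v^⊥ respectively, and D = Pπ₀ − π₁. Then ker(D) is the hyperplane of V orthogonal to u + v. -/
open scoped RealInnerProductSpace

theorem stmt_7 (V : Type*) [NormedAddCommGroup V] [InnerProductSpace ℝ V]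
    [FiniteDimensional ℝ V]
    (u v : V) (hu : ‖u‖ = 1) (hv : ‖v‖ = 1)
    (huv : ⟪u, v⟫ ≠ 1) (huv' : ⟪u, v⟫ ≠ -1)
    (P : V →ₗ[ℝ] V) (hP : ∀ x, ‖P x‖ = ‖x‖) (hPu : P u = v)
    (hW : ∀ x ∈ Submodule.span ℝ {u, v}, P x ∈ Submodule.span ℝ {u, v})
    (hWperp : ∀ x ∈ (Submodule.span ℝ {u, v})ᗮ, P x = x)
    (hdet : LinearMap.det (P.restrict hW) = 1) :
    ∀ x : V, (P (x - ⟪x, u⟫ • u) - (x - ⟪x, v⟫ • v) = 0 ↔ ⟪x, u + v⟫ = 0) := by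
  set c : ℝ := ⟪u, v⟫ with hc
  have huu : ⟪u, u⟫ = 1 := by
    rw [real_inner_self_eq_norm_mul_norm, hu]; ring
  have hvv : ⟪v, v⟫ = 1 := by
    rw [real_inner_self_eq_norm_mul_norm, hv]; ring
  have hvu : ⟪v, u⟫ = c := (real_inner_comm v u).symm
  have hc2 : c * c ≠ 1 := by
    intro h
    rcases mul_self_eq_one_iff.mp h with h | h
    · exact huv h
    · exact huv' h
  have hinner : ∀ x y : V, ⟪P x, P y⟫ = ⟪x, y⟫ := by
    intro x y
    rw [real_inner_eq_norm_add_mul_self_sub_norm_mul_self_sub_norm_mul_self_div_two,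
      real_inner_eq_norm_add_mul_self_sub_norm_mul_self_sub_norm_mul_self_div_two x y,
      ← map_add, hP, hP, hP]
  -- u and v are linearly independent
  have hli : LinearIndependent ℝ ![u, v] := by
    rw [LinearIndependent.pair_iff]
    intro s t hst
    have h1 : s + t * c = 0 := by
      have := congrArg (fun w => ⟪w, u⟫) hst
      simpa [inner_add_left, inner_smul_left, huu, hvu, hu] using this
    have h2 : s * c + t = 0 := by
      have := congrArg (fun w => ⟪w, v⟫) hst
      simpa [inner_add_left, inner_smul_left, hvv, hv] using this
    have hs : s * (1 - c * c) = 0 := by linear_combination h1 - c * h2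
    have hs0 : s = 0 := by
      rcases mul_eq_zero.mp hs with h | h
      · exact h
      · exact absurd (by linarith) hc2
    constructor
    · exact hs0
    · rw [hs0] at h2; linarith
  have huW : u ∈ Submodule.span ℝ ({u, v} : Set V) :=
    Submodule.subset_span (by simp)
  have hvW : v ∈ Submodule.span ℝ ({u, v} : Set V) :=
    Submodule.subset_span (by simp)
  -- determine P v
  obtain ⟨s, t, hPv⟩ := Submodule.mem_span_pair.mp (hW v hvW)
  have hA : s * c + t = c := by
    have h := hinner u v
    rw [hPu, ← hPv] at h
    simpa [inner_add_right, inner_smul_right, hvu, hvv, hv] using h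
  have hB : s * s + 2 * (s * t * c) + t * t = 1 := by
    have h := hinner v v
    rw [← hPv, hvv] at h
    simp only [inner_add_left, inner_add_right, inner_smul_left, inner_smul_right,
      huu, hvv, hvu, hc.symm, starRingEnd_apply, star_trivial] at h
    nlinarith [h]
  have hs2 : (s * s - 1) * (1 - c * c) = 0 := by
    linear_combination hB - (s * c + t + c) * hA
  have hs1 : s = 1 ∨ s = -1 := by
    rcases mul_eq_zero.mp hs2 with h | h
    · exact mul_self_eq_one_iff.mp (by linarith)
    · exact absurd (by linarith) hc2
  rcases hs1 with hs | hs
  · -- s = 1 : P v = u, contradicting det = 1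
    exfalso
    have ht : t = 0 := by rw [hs] at hA; linarith
    have hPv' : P v = u := by rw [← hPv, hs, ht]; simp
    have hrange : Submodule.span ℝ (Set.range ![u, v]) = Submodule.span ℝ ({u, v} : Set V) := by
      congr 1
      ext x
      simp [Fin.exists_fin_two, eq_comm, or_comm]
    let b : Module.Basis (Fin 2) ℝ (Submodule.span ℝ ({u, v} : Set V)) :=
      (Module.Basis.span hli).map (LinearEquiv.ofEq _ _ hrange)
    have hb0 : (b 0 : V) = u := by
      simp [b, Module.Basis.span_apply]
    have hb1 : (b 1 : V) = v := by
      simp [b, Module.Basis.span_apply]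
    have hf0 : (P.restrict hW) (b 0) = b 1 := by
      apply Subtype.ext
      rw [LinearMap.restrict_apply]
      simp [hb0, hb1, hPu]
    have hf1 : (P.restrict hW) (b 1) = b 0 := by
      apply Subtype.ext
      rw [LinearMap.restrict_apply]
      simp [hb0, hb1, hPv']
    have hM : LinearMap.toMatrix b b (P.restrict hW) = !![0, 1; 1, 0] := by
      ext i j
      fin_cases i <;> fin_cases j <;>
        simp [LinearMap.toMatrix_apply, hf0, hf1, Module.Basis.repr_self, Finsupp.single_apply]
    have : LinearMap.det (P.restrict hW) = (-1 : ℝ) := by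
      rw [← LinearMap.det_toMatrix b, hM, Matrix.det_fin_two_of]
      norm_num
    rw [hdet] at this
    norm_num at this
  · -- s = -1 : P v = 2c • v - u
    have ht : t = 2 * c := by rw [hs] at hA; linarith
    have hPv' : P v = (2 * c) • v - u := by
      rw [← hPv, hs, ht]; module
    intro x
    obtain ⟨y, hy, z, hz, hx⟩ :=
      (Submodule.span ℝ ({u, v} : Set V)).exists_add_mem_mem_orthogonal x
    obtain ⟨α, β, hy'⟩ := Submodule.mem_span_pair.mp hy
    have hzu : ⟪u, z⟫ = 0 := (Submodule.mem_orthogonal _ z).mp hz u huW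
    have hzv : ⟪v, z⟫ = 0 := (Submodule.mem_orthogonal _ z).mp hz v hvW
    have hzu' : ⟪z, u⟫ = 0 := by rw [real_inner_comm]; exact hzu
    have hzv' : ⟪z, v⟫ = 0 := by rw [real_inner_comm]; exact hzv
    have hPz : P z = z := hWperp z hz
    subst hx
    rw [← hy']
    have hxu : ⟪α • u + β • v + z, u⟫ = α + β * c := by
      simp [inner_add_left, inner_smul_left, huu, hvu, hzu', hu]
    have hxv : ⟪α • u + β • v + z, v⟫ = α * c + β := by
      simp [inner_add_left, inner_smul_left, hvv, hzv', hc.symm, hv]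
    have key : P ((α • u + β • v + z) - ⟪α • u + β • v + z, u⟫ • u)
        - ((α • u + β • v + z) - ⟪α • u + β • v + z, v⟫ • v)
        = (α + β) • (c • v - u) := by
      rw [hxu, hxv]
      simp only [map_sub, map_add, map_smul, hPu, hPv', hPz]
      module
    rw [key]
    have hne : c • v - u ≠ 0 := by
      intro h
      have h' : u = c • v := by
        rw [sub_eq_zero] at h; exact h.symm
      have : (1 : ℝ) = c * c := by
        have := huu
        rw [h'] at this
        simpa [inner_smul_left, inner_smul_right, hvv, hv, norm_smul, Real.norm_eq_abs, sq_abs, sq] using this.symm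
      exact hc2 this.symm
    constructor
    · intro h
      have hab : α + β = 0 := by
        rcases smul_eq_zero.mp h with h' | h'
        · exact h'
        · exact absurd h' hne
      rw [inner_add_right, hxu, hxv]
      linear_combination (1 + c) * hab
    · intro h
      rw [inner_add_right, hxu, hxv] at h
      have hab : (α + β) * (1 + c) = 0 := by linarith
      have hc3 : (1 : ℝ) + c ≠ 0 := by
        intro h'
        exact huv' (by linarith)
      have : α + β = 0 := by
        rcases mul_eq_zero.mp hab with h' | h'
        · exact h'
        · exact absurd h' hc3
      rw [this, zero_smul]
end

section
/- Let f : ℝⁿ → ℝ be a convex function that is κ-strongly convex when restricted to a ball B_{1+r}(z) ⊆ ℝⁿ (for some κ > 0, r > 0, z ∈ ℝⁿ), and let Θ : ℝⁿ → ℝ be a nonnegative integrable even function (Θ(−y) = Θ(y)) with ∫Θ = 1 and Θ(y) ≥ c > 0 for all y ∈ B₁(z). Assume the convolution f * Θ is everywhere defined and finite. Then f * Θ is κ̂-strongly convex on B_r(0) with κ̂ = κ · c · ωₙ, where ωₙ is the volume of the unit ball in ℝⁿ. -/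
open MeasureTheory

/-- κ-strong convexity of `f` on a set `U`. -/
def KStrongConvexOn {E : Type*} [NormedAddCommGroup E] [NormedSpace ℝ E]
    (U : Set E) (κ : ℝ) (f : E → ℝ) : Prop :=
  ∀ x₀ ∈ U, ∀ x₁ ∈ U, ∀ l : ℝ, l ∈ Set.Icc (0:ℝ) 1 →
    f (l • x₀ + (1 - l) • x₁) + l * (1 - l) / 2 * κ * ‖x₀ - x₁‖ ^ 2 ≤
      l * f x₀ + (1 - l) * f x₁

theorem stmt_13 (n : ℕ) (f Θ : EuclideanSpace ℝ (Fin n) → ℝ)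
    (hf : ConvexOn ℝ Set.univ f)
    (κ r c : ℝ) (hκ : 0 < κ) (hr : 0 < r) (hc : 0 < c)
    (z : EuclideanSpace ℝ (Fin n))
    (hfs : KStrongConvexOn (Metric.ball z (1 + r)) κ f)
    (hΘ0 : ∀ y, 0 ≤ Θ y) (hΘint : Integrable Θ)
    (hΘeven : ∀ y, Θ (-y) = Θ y) (hΘ1 : ∫ y, Θ y = 1)
    (hΘc : ∀ y ∈ Metric.ball z 1, c ≤ Θ y)
    (F : EuclideanSpace ℝ (Fin n) → ℝ)
    (hF : ∀ x, F x = ∫ y, f (x + y) * Θ (-y))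
    (hFint : ∀ x, Integrable (fun y => f (x + y) * Θ (-y))) :
    KStrongConvexOn (Metric.ball (0 : EuclideanSpace ℝ (Fin n)) r)
      (κ * c * (volume (Metric.ball (0 : EuclideanSpace ℝ (Fin n)) 1)).toReal) F := by
  intro x₀ hx₀ x₁ hx₁ l hl
  obtain ⟨hl0, hl1⟩ := hl
  have hl1' : 0 ≤ 1 - l := by linarith
  set xl := l • x₀ + (1 - l) • x₁ with hxl
  set K := l * (1 - l) / 2 * κ * ‖x₀ - x₁‖ ^ 2 with hKdef
  have hK0 : 0 ≤ K := by
    have : 0 ≤ l * (1 - l) := mul_nonneg hl0 hl1'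
    positivity
  have hxly : ∀ y, xl + y = l • (x₀ + y) + (1 - l) • (x₁ + y) := by
    intro y
    rw [hxl]
    rw [smul_add, smul_add]
    have : l • y + (1 - l) • y = y := by
      rw [← add_smul]; simp
    rw [show l • x₀ + l • y + ((1 - l) • x₁ + (1 - l) • y)
        = l • x₀ + (1 - l) • x₁ + (l • y + (1 - l) • y) by abel, this]
  have hpt : ∀ y, f (xl + y) * Θ (-y)
      + Set.indicator (Metric.ball z 1) (fun _ => K * c) y
      ≤ l * (f (x₀ + y) * Θ (-y)) + (1 - l) * (f (x₁ + y) * Θ (-y)) := by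
    intro y
    have hΘny : 0 ≤ Θ (-y) := hΘ0 _
    by_cases hy : y ∈ Metric.ball z 1
    · rw [Set.indicator_of_mem hy]
      have hmem : ∀ x : EuclideanSpace ℝ (Fin n), x ∈ Metric.ball (0:EuclideanSpace ℝ (Fin n)) r →
          x + y ∈ Metric.ball z (1 + r) := by
        intro x hx
        rw [Metric.mem_ball] at hy ⊢
        rw [mem_ball_zero_iff] at hx
        calc dist (x + y) z ≤ dist (x + y) y + dist y z := dist_triangle _ _ _
          _ = ‖x‖ + dist y z := by simp [dist_eq_norm]
          _ < r + 1 := by linarith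
          _ = 1 + r := by ring
      have hs := hfs (x₀ + y) (hmem x₀ hx₀) (x₁ + y) (hmem x₁ hx₁) l ⟨hl0, hl1⟩
      rw [← hxly y] at hs
      have hnorm : ‖(x₀ + y) - (x₁ + y)‖ = ‖x₀ - x₁‖ := by
        congr 1; abel
      rw [hnorm] at hs
      -- hs : f (xl + y) + K ≤ l * f (x₀ + y) + (1 - l) * f (x₁ + y)
      have hcy : c ≤ Θ (-y) := by rw [hΘeven]; exact hΘc y hy
      have h1 : (f (xl + y) + K) * Θ (-y) ≤
          (l * f (x₀ + y) + (1 - l) * f (x₁ + y)) * Θ (-y) :=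
        mul_le_mul_of_nonneg_right hs hΘny
      have h2 : K * c ≤ K * Θ (-y) := mul_le_mul_of_nonneg_left hcy hK0
      nlinarith [h1, h2]
    · rw [Set.indicator_of_notMem hy, add_zero]
      have hs := hf.2 (Set.mem_univ (x₀ + y)) (Set.mem_univ (x₁ + y)) hl0 hl1' (by ring)
      rw [← hxly y] at hs
      have h1 : f (xl + y) * Θ (-y) ≤
          (l • f (x₀ + y) + (1 - l) • f (x₁ + y)) * Θ (-y) :=
        mul_le_mul_of_nonneg_right hs hΘny
      simp only [smul_eq_mul] at h1
      nlinarith [h1]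
  have hind : Integrable (Set.indicator (Metric.ball z 1) (fun _ => K * c) :
      EuclideanSpace ℝ (Fin n) → ℝ) := by
    refine (integrableOn_const measure_ball_lt_top.ne).integrable_indicator
      measurableSet_ball
  have hintL : Integrable (fun y => f (xl + y) * Θ (-y)
      + Set.indicator (Metric.ball z 1) (fun _ => K * c) y) := (hFint xl).add hind
  have hintR : Integrable (fun y => l * (f (x₀ + y) * Θ (-y))
      + (1 - l) * (f (x₁ + y) * Θ (-y))) :=
    ((hFint x₀).const_mul l).add ((hFint x₁).const_mul (1 - l))
  have hmono := integral_mono hintL hintR hpt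
  rw [integral_add (hFint xl) hind, integral_add ((hFint x₀).const_mul l)
    ((hFint x₁).const_mul (1 - l)), integral_const_mul, integral_const_mul,
    integral_indicator_const _ measurableSet_ball] at hmono
  have hvol : volume (Metric.ball z 1) = volume (Metric.ball (0 : EuclideanSpace ℝ (Fin n)) 1) :=
    Measure.addHaar_ball_center volume z 1
  rw [measureReal_def, hvol] at hmono
  rw [hF xl, hF x₀, hF x₁]
  have : l * (1 - l) / 2 * (κ * c * (volume (Metric.ball (0 : EuclideanSpace ℝ (Fin n)) 1)).toReal)
      * ‖x₀ - x₁‖ ^ 2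
      = (volume (Metric.ball (0 : EuclideanSpace ℝ (Fin n)) 1)).toReal • (K * c) := by
    rw [hKdef, smul_eq_mul]; ring
  rw [this]
  linarith [hmono]
end
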